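/- For every n ≥ 0, the number of 312-avoiding permutations of {1,2,…,n} equals the Catalan number C_n = (1/(n+1))·binom(2n, n). -/

import Mathlib

def Avoids312 {n : ℕ} (π : Equiv.Perm (Fin n)) : Prop :=
  ¬ ∃ i j k : Fin n, i < j ∧ j < k ∧ π j < π k ∧ π k < π i

namespace Av312

def insFun (n p : ℕ) (hp : p ≤ n) (σ : Equiv.Perm (Fin p)) (τ : Equiv.Perm (Fin (n - p)))
    (i : Fin (n + 1)) : Fin (n + 1) :=
  if h : (i : ℕ) < p then ⟨(σ ⟨i, h⟩ : ℕ) + 1, by have := (σ ⟨i, h⟩).isLt; omega⟩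
  else if h2 : (i : ℕ) = p then ⟨0, by omega⟩
  else ⟨(τ ⟨(i : ℕ) - p - 1, by have := i.isLt; omega⟩ : ℕ) + p + 1,
    by have := (τ ⟨(i : ℕ) - p - 1, by have := i.isLt; omega⟩).isLt; omega⟩

variable {n p : ℕ} {hp : p ≤ n} {σ : Equiv.Perm (Fin p)} {τ : Equiv.Perm (Fin (n - p))}

theorem insFun_lt {i : Fin (n+1)} (h : (i : ℕ) < p) :
    (insFun n p hp σ τ i : ℕ) = (σ ⟨i, h⟩ : ℕ) + 1 := by
  rw [insFun, dif_pos h]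

theorem insFun_eq {i : Fin (n+1)} (h : (i : ℕ) = p) :
    (insFun n p hp σ τ i : ℕ) = 0 := by
  rw [insFun, dif_neg (by omega), dif_pos h]

theorem insFun_gt {i : Fin (n+1)} (h : p < (i : ℕ)) :
    (insFun n p hp σ τ i : ℕ)
      = (τ ⟨(i : ℕ) - p - 1, by have := i.isLt; omega⟩ : ℕ) + p + 1 := by
  rw [insFun, dif_neg (by omega), dif_neg (by omega)]

theorem insFun_lt_range {i : Fin (n+1)} (h : (i : ℕ) < p) :
    1 ≤ (insFun n p hp σ τ i : ℕ) ∧ (insFun n p hp σ τ i : ℕ) ≤ p := by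
  rw [insFun_lt h]; have := (σ ⟨i, h⟩).isLt; omega

theorem insFun_gt_range {i : Fin (n+1)} (h : p < (i : ℕ)) :
    p + 1 ≤ (insFun n p hp σ τ i : ℕ) ∧ (insFun n p hp σ τ i : ℕ) ≤ n := by
  rw [insFun_gt h]
  have := (τ ⟨(i : ℕ) - p - 1, by have := i.isLt; omega⟩).isLt; omega

theorem insFun_sigma {x : Fin p} {h : (x : ℕ) < n + 1} :
    (insFun n p hp σ τ ⟨(x : ℕ), h⟩ : ℕ) = (σ x : ℕ) + 1 := by
  rw [insFun_lt (show ((⟨(x : ℕ), h⟩ : Fin (n+1)) : ℕ) < p from x.isLt)]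

theorem insFun_tau {x : Fin (n - p)} {h : (x : ℕ) + p + 1 < n + 1} :
    (insFun n p hp σ τ ⟨(x : ℕ) + p + 1, h⟩ : ℕ) = (τ x : ℕ) + p + 1 := by
  rw [insFun_gt (show p < ((⟨(x : ℕ) + p + 1, h⟩ : Fin (n+1)) : ℕ) from by
    show p < (x : ℕ) + p + 1; omega)]
  have hx2 : (⟨((⟨(x : ℕ) + p + 1, h⟩ : Fin (n+1)) : ℕ) - p - 1,
      by have := x.isLt; omega⟩ : Fin (n - p)) = x :=
    Fin.ext (by show (x : ℕ) + p + 1 - p - 1 = (x : ℕ); omega)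
  rw [hx2]

theorem insFun_inj : Function.Injective (insFun n p hp σ τ) := by
  intro a b hab
  have hab' : (insFun n p hp σ τ a : ℕ) = (insFun n p hp σ τ b : ℕ) := by rw [hab]
  rcases lt_trichotomy (a : ℕ) p with ha | ha | ha <;>
    rcases lt_trichotomy (b : ℕ) p with hb | hb | hb
  · rw [insFun_lt ha, insFun_lt hb] at hab'
    have : σ ⟨a, ha⟩ = σ ⟨b, hb⟩ := Fin.ext (by omega)
    have h2 := congrArg Fin.val (σ.injective this)
    exact Fin.ext h2
  · rw [insFun_lt ha, insFun_eq hb] at hab'; omega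
  · rw [insFun_lt ha] at hab'
    have := (insFun_gt_range (σ := σ) (τ := τ) (hp := hp) hb).1
    have := (σ ⟨a, ha⟩).isLt; omega
  · rw [insFun_eq ha, insFun_lt hb] at hab'; omega
  · exact Fin.ext (by omega)
  · rw [insFun_eq ha] at hab'
    have := (insFun_gt_range (σ := σ) (τ := τ) (hp := hp) hb).1; omega
  · rw [insFun_lt hb] at hab'
    have := (insFun_gt_range (σ := σ) (τ := τ) (hp := hp) ha).1
    have := (σ ⟨b, hb⟩).isLt; omega
  · rw [insFun_eq hb] at hab'
    have := (insFun_gt_range (σ := σ) (τ := τ) (hp := hp) ha).1; omega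
  · rw [insFun_gt ha, insFun_gt hb] at hab'
    have h1 : τ ⟨(a : ℕ) - p - 1, by have := a.isLt; omega⟩
        = τ ⟨(b : ℕ) - p - 1, by have := b.isLt; omega⟩ := Fin.ext (by omega)
    have := τ.injective h1
    have := congrArg Fin.val this
    simp only at this
    exact Fin.ext (by omega)

noncomputable def insPerm (n p : ℕ) (hp : p ≤ n) (σ : Equiv.Perm (Fin p)) (τ : Equiv.Perm (Fin (n - p))) :
    Equiv.Perm (Fin (n + 1)) :=
  Equiv.ofBijective (insFun n p hp σ τ) (Finite.injective_iff_bijective.mp insFun_inj)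

theorem insPerm_apply (i : Fin (n+1)) : insPerm n p hp σ τ i = insFun n p hp σ τ i := rfl

theorem insPerm_avoids (hσ : Avoids312 σ) (hτ : Avoids312 τ) :
    Avoids312 (insPerm n p hp σ τ) := by
  rintro ⟨i, j, k, hij, hjk, h1, h2⟩
  rw [Fin.lt_def] at hij hjk h1 h2
  simp only [insPerm_apply] at h1 h2
  rcases lt_trichotomy (k : ℕ) p with hk | hk | hk
  · -- all three in block 1
    have hj : (j : ℕ) < p := lt_trans hjk hk
    have hi : (i : ℕ) < p := lt_trans hij hj
    rw [insFun_lt hj, insFun_lt hk] at h1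
    rw [insFun_lt hk, insFun_lt hi] at h2
    exact hσ ⟨⟨i, hi⟩, ⟨j, hj⟩, ⟨k, hk⟩, by rw [Fin.lt_def]; exact hij,
      by rw [Fin.lt_def]; exact hjk, by rw [Fin.lt_def]; omega, by rw [Fin.lt_def]; omega⟩
  · rw [insFun_eq hk] at h1; omega
  · rcases lt_trichotomy (i : ℕ) p with hi | hi | hi
    · have := (insFun_lt_range (σ := σ) (τ := τ) (hp := hp) hi).2
      have := (insFun_gt_range (σ := σ) (τ := τ) (hp := hp) hk).1
      omega
    · rw [insFun_eq hi] at h2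
      omega
    · have hj : p < (j : ℕ) := lt_trans hi hij
      rw [insFun_gt hj, insFun_gt hk] at h1
      rw [insFun_gt hk, insFun_gt hi] at h2
      refine hτ ⟨⟨(i : ℕ) - p - 1, by have := i.isLt; omega⟩,
        ⟨(j : ℕ) - p - 1, by have := j.isLt; omega⟩,
        ⟨(k : ℕ) - p - 1, by have := k.isLt; omega⟩,
        by rw [Fin.lt_def]; simp; omega, by rw [Fin.lt_def]; simp; omega,
        by rw [Fin.lt_def]; omega, by rw [Fin.lt_def]; omega⟩

theorem insPerm_zero {i : Fin (n+1)} (h : insPerm n p hp σ τ i = 0) : (i : ℕ) = p := by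
  have h' : (insPerm n p hp σ τ i : ℕ) = 0 := by rw [h]; rfl
  rw [insPerm_apply] at h'
  rcases lt_trichotomy (i : ℕ) p with hi | hi | hi
  · have := (insFun_lt_range (σ := σ) (τ := τ) (hp := hp) hi).1; omega
  · exact hi
  · have := (insFun_gt_range (σ := σ) (τ := τ) (hp := hp) hi).1; omega

set_option maxHeartbeats 2000000 in
theorem exists_decomp (π : Equiv.Perm (Fin (n+1))) (hπ : Avoids312 π) :
    ∃ (p : ℕ) (hp : p ≤ n) (σ : Equiv.Perm (Fin p)) (τ : Equiv.Perm (Fin (n - p))),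
      Avoids312 σ ∧ Avoids312 τ ∧ insPerm n p hp σ τ = π := by
  classical
  obtain ⟨p, hplt, hpdef⟩ : ∃ (p : ℕ) (h : p < n + 1), π.symm 0 = ⟨p, h⟩ :=
    ⟨(π.symm 0 : ℕ), (π.symm 0).isLt, Fin.ext rfl⟩
  have hp : p ≤ n := by omega
  have hπp : π ⟨p, hplt⟩ = 0 := by rw [← hpdef]; exact π.apply_symm_apply 0
  have hzero : ∀ i : Fin (n+1), π i = 0 → (i : ℕ) = p := by
    intro i hi
    have h1 : i = π.symm 0 := by rw [← hi, Equiv.symm_apply_apply]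
    rw [h1, hpdef]
  have claim1 : ∀ i : Fin (n+1), (i : ℕ) < p → 1 ≤ (π i : ℕ) ∧ (π i : ℕ) ≤ p := by
    intro i hi
    have hn : 1 ≤ n := by omega
    have h0 : 1 ≤ (π i : ℕ) := by
      rcases Nat.eq_zero_or_pos (π i : ℕ) with h | h
      · exfalso; have := hzero i (Fin.ext h); omega
      · exact h
    refine ⟨h0, ?_⟩
    by_contra hbig
    push_neg at hbig
    set V : Finset (Fin (n+1)) := Finset.Icc ⟨1, by omega⟩ ⟨p, hplt⟩ with hV
    set P : Finset (Fin (n+1)) := Finset.Iio ⟨p, hplt⟩ with hP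
    have hsub : V.image π.symm ⊆ P.erase i := by
      intro x hx
      obtain ⟨v, hv, rfl⟩ := Finset.mem_image.mp hx
      rw [hV, Finset.mem_Icc] at hv
      have hv1 : 1 ≤ (v : ℕ) := hv.1
      have hv2 : (v : ℕ) ≤ p := hv.2
      refine Finset.mem_erase.mpr ⟨?_, ?_⟩
      · intro hcon
        have hv3 : v = π i := by rw [← hcon, Equiv.apply_symm_apply]
        have := congrArg Fin.val hv3
        omega
      · rw [hP, Finset.mem_Iio]
        show ((π.symm v : Fin (n+1)) : ℕ) < p
        by_contra hge
        push_neg at hge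
        rcases eq_or_lt_of_le hge with heq | hgt
        · have h3 : π.symm v = ⟨p, hplt⟩ := Fin.ext heq.symm
          have h4 : v = 0 := by rw [← hπp, ← h3, Equiv.apply_symm_apply]
          have := congrArg Fin.val h4
          simp at this
          rw [h4] at hv1; simp at hv1
        · refine hπ ⟨i, ⟨p, hplt⟩, π.symm v, ?_, ?_, ?_, ?_⟩
          · show (i : ℕ) < p; exact hi
          · show p < ((π.symm v : Fin (n+1)) : ℕ); exact hgt
          · show ((π ⟨p, hplt⟩ : Fin (n+1)) : ℕ) < ((π (π.symm v) : Fin (n+1)) : ℕ)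
            rw [hπp, Equiv.apply_symm_apply]
            show 0 < (v : ℕ)
            omega
          · show ((π (π.symm v) : Fin (n+1)) : ℕ) < ((π i : Fin (n+1)) : ℕ)
            rw [Equiv.apply_symm_apply]
            omega
    have hcard1 : (V.image π.symm).card = p := by
      rw [Finset.card_image_of_injective _ π.symm.injective, hV, Fin.card_Icc]
      simp
    have hmemP : i ∈ P := by
      rw [hP, Finset.mem_Iio]; show (i : ℕ) < p; exact hi
    have hcard2 : (P.erase i).card = p - 1 := by
      rw [Finset.card_erase_of_mem hmemP, hP, Fin.card_Iio]
    have := Finset.card_le_card hsub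
    omega
  have claim2 : ∀ k : Fin (n+1), p < (k : ℕ) → p + 1 ≤ (π k : ℕ) := by
    intro k hk
    have hn : 1 ≤ n := by have := k.isLt; omega
    by_contra hle
    push_neg at hle
    have h0 : 1 ≤ (π k : ℕ) := by
      rcases Nat.eq_zero_or_pos (π k : ℕ) with h | h
      · exfalso; have := hzero k (Fin.ext h); omega
      · exact h
    set V : Finset (Fin (n+1)) := Finset.Icc ⟨1, by omega⟩ ⟨p, hplt⟩ with hV
    set P : Finset (Fin (n+1)) := Finset.Iio ⟨p, hplt⟩ with hP
    have hsub : P.image π ⊆ V := by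
      intro x hx
      obtain ⟨w, hw, rfl⟩ := Finset.mem_image.mp hx
      rw [hP, Finset.mem_Iio] at hw
      have hw' : (w : ℕ) < p := hw
      have hcl := claim1 w hw'
      rw [hV, Finset.mem_Icc]
      exact ⟨hcl.1, hcl.2⟩
    have himg : P.image π = V := by
      apply Finset.eq_of_subset_of_card_le hsub
      rw [Finset.card_image_of_injective _ π.injective, hP, hV, Fin.card_Iio, Fin.card_Icc]
      simp
    have hmem : π k ∈ V := by
      rw [hV, Finset.mem_Icc]
      exact ⟨h0, show (π k : ℕ) ≤ p by omega⟩
    rw [← himg] at hmem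
    obtain ⟨w, hw, hwk⟩ := Finset.mem_image.mp hmem
    have hwk2 : (w : ℕ) = (k : ℕ) := congrArg Fin.val (π.injective hwk)
    rw [hP, Finset.mem_Iio] at hw
    have hw' : (w : ℕ) < p := hw
    omega
  -- construct σ and τ
  set σf : Fin p → Fin p := fun x =>
    ⟨(π ⟨(x : ℕ), by omega⟩ : ℕ) - 1, by
      have := claim1 ⟨(x : ℕ), by omega⟩ x.isLt; omega⟩ with hσf
  have eσ : ∀ x : Fin p, (σf x : ℕ) = (π ⟨(x : ℕ), by omega⟩ : ℕ) - 1 := fun x => rfl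
  have hσinj : Function.Injective σf := by
    intro a b hab
    have h1 := claim1 ⟨(a : ℕ), by omega⟩ a.isLt
    have h2 := claim1 ⟨(b : ℕ), by omega⟩ b.isLt
    have hv : (π ⟨(a : ℕ), by omega⟩ : ℕ) = (π ⟨(b : ℕ), by omega⟩ : ℕ) := by
      have h3 := congrArg Fin.val hab
      rw [eσ a, eσ b] at h3
      omega
    have h4 := π.injective (Fin.ext hv)
    simp only [Fin.mk.injEq] at h4
    exact Fin.ext h4
  set τf : Fin (n - p) → Fin (n - p) := fun x =>
    ⟨(π ⟨(x : ℕ) + p + 1, by have := x.isLt; omega⟩ : ℕ) - p - 1, by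
      have h1 := claim2 ⟨(x : ℕ) + p + 1, by have := x.isLt; omega⟩
        (show p < (x : ℕ) + p + 1 by omega)
      have h2 := (π ⟨(x : ℕ) + p + 1, by have := x.isLt; omega⟩).isLt
      have := x.isLt; omega⟩ with hτf
  have eτ : ∀ x : Fin (n - p),
      (τf x : ℕ) = (π ⟨(x : ℕ) + p + 1, by have := x.isLt; omega⟩ : ℕ) - p - 1 :=
    fun x => rfl
  have hτinj : Function.Injective τf := by
    intro a b hab
    have h1 := claim2 ⟨(a : ℕ) + p + 1, by have := a.isLt; omega⟩
      (show p < (a : ℕ) + p + 1 by omega)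
    have h2 := claim2 ⟨(b : ℕ) + p + 1, by have := b.isLt; omega⟩
      (show p < (b : ℕ) + p + 1 by omega)
    have hv : (π ⟨(a : ℕ) + p + 1, by have := a.isLt; omega⟩ : ℕ)
        = (π ⟨(b : ℕ) + p + 1, by have := b.isLt; omega⟩ : ℕ) := by
      have h3 := congrArg Fin.val hab
      rw [eτ a, eτ b] at h3
      omega
    have h4 := π.injective (Fin.ext hv)
    simp only [Fin.mk.injEq] at h4
    exact Fin.ext (by omega)
  obtain ⟨σ, hσap⟩ : ∃ σ : Equiv.Perm (Fin p), ∀ x, σ x = σf x :=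
    ⟨Equiv.ofBijective σf (Finite.injective_iff_bijective.mp hσinj), fun x => rfl⟩
  obtain ⟨τ, hτap⟩ : ∃ τ : Equiv.Perm (Fin (n - p)), ∀ x, τ x = τf x :=
    ⟨Equiv.ofBijective τf (Finite.injective_iff_bijective.mp hτinj), fun x => rfl⟩
  have hσav : Avoids312 σ := by
    rintro ⟨a, b, c, hab, hbc, h1, h2⟩
    have hab' : (a : ℕ) < (b : ℕ) := hab
    have hbc' : (b : ℕ) < (c : ℕ) := hbc
    rw [hσap b, hσap c] at h1
    rw [hσap c, hσap a] at h2
    have h1' : (σf b : ℕ) < (σf c : ℕ) := h1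
    have h2' : (σf c : ℕ) < (σf a : ℕ) := h2
    rw [eσ b, eσ c] at h1'
    rw [eσ c, eσ a] at h2'
    have ha := claim1 ⟨(a : ℕ), by omega⟩ a.isLt
    have hb := claim1 ⟨(b : ℕ), by omega⟩ b.isLt
    have hc := claim1 ⟨(c : ℕ), by omega⟩ c.isLt
    refine hπ ⟨⟨(a : ℕ), by omega⟩, ⟨(b : ℕ), by omega⟩, ⟨(c : ℕ), by omega⟩, ?_, ?_, ?_, ?_⟩
    · show (a : ℕ) < (b : ℕ); omega
    · show (b : ℕ) < (c : ℕ); omega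
    · show (π ⟨(b : ℕ), by omega⟩ : ℕ) < (π ⟨(c : ℕ), by omega⟩ : ℕ); omega
    · show (π ⟨(c : ℕ), by omega⟩ : ℕ) < (π ⟨(a : ℕ), by omega⟩ : ℕ); omega
  have hτav : Avoids312 τ := by
    rintro ⟨a, b, c, hab, hbc, h1, h2⟩
    have hab' : (a : ℕ) < (b : ℕ) := hab
    have hbc' : (b : ℕ) < (c : ℕ) := hbc
    rw [hτap b, hτap c] at h1
    rw [hτap c, hτap a] at h2
    have h1' : (τf b : ℕ) < (τf c : ℕ) := h1
    have h2' : (τf c : ℕ) < (τf a : ℕ) := h2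
    rw [eτ b, eτ c] at h1'
    rw [eτ c, eτ a] at h2'
    have ha := claim2 ⟨(a : ℕ) + p + 1, by have := a.isLt; omega⟩
      (show p < (a : ℕ) + p + 1 by omega)
    have hb := claim2 ⟨(b : ℕ) + p + 1, by have := b.isLt; omega⟩
      (show p < (b : ℕ) + p + 1 by omega)
    have hc := claim2 ⟨(c : ℕ) + p + 1, by have := c.isLt; omega⟩
      (show p < (c : ℕ) + p + 1 by omega)
    refine hπ ⟨⟨(a : ℕ) + p + 1, by have := a.isLt; omega⟩,
      ⟨(b : ℕ) + p + 1, by have := b.isLt; omega⟩,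
      ⟨(c : ℕ) + p + 1, by have := c.isLt; omega⟩, ?_, ?_, ?_, ?_⟩
    · show (a : ℕ) + p + 1 < (b : ℕ) + p + 1; omega
    · show (b : ℕ) + p + 1 < (c : ℕ) + p + 1; omega
    · show (π ⟨(b : ℕ) + p + 1, by have := b.isLt; omega⟩ : ℕ)
        < (π ⟨(c : ℕ) + p + 1, by have := c.isLt; omega⟩ : ℕ)
      omega
    · show (π ⟨(c : ℕ) + p + 1, by have := c.isLt; omega⟩ : ℕ)
        < (π ⟨(a : ℕ) + p + 1, by have := a.isLt; omega⟩ : ℕ)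
      omega
  refine ⟨p, hp, σ, τ, hσav, hτav, ?_⟩
  apply Equiv.ext
  intro i
  apply Fin.ext
  rcases lt_trichotomy (i : ℕ) p with hi | hi | hi
  · rw [insPerm_apply, insFun_lt hi]
    have h1 := claim1 i hi
    rw [hσap, eσ]
    have heq : (⟨((⟨(i : ℕ), hi⟩ : Fin p) : ℕ), by omega⟩ : Fin (n+1)) = i := Fin.ext rfl
    rw [heq]
    omega
  · rw [insPerm_apply, insFun_eq hi]
    have heq : i = ⟨p, hplt⟩ := Fin.ext hi
    rw [heq, hπp]
    simp
  · rw [insPerm_apply, insFun_gt hi]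
    have h2 := claim2 i hi
    rw [hτap, eτ]
    have heq : (⟨((⟨(i : ℕ) - p - 1, by have := i.isLt; omega⟩ : Fin (n - p)) : ℕ) + p + 1,
        by have := i.isLt; omega⟩ : Fin (n+1)) = i :=
      Fin.ext (by show ((i : ℕ) - p - 1) + p + 1 = (i : ℕ); have := i.isLt; omega)
    rw [heq]
    omega

noncomputable def f (m : ℕ) : ℕ := Nat.card {π : Equiv.Perm (Fin m) // Avoids312 π}

theorem f_zero : f 0 = 1 := by
  haveI : Unique {π : Equiv.Perm (Fin 0) // Avoids312 π} :=
    { default := ⟨1, by rintro ⟨i, -⟩; exact i.elim0⟩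
      uniq := fun π => Subtype.ext (Equiv.ext fun x => x.elim0) }
  exact Nat.card_unique

theorem card_sigma' {ι : Type*} [Fintype ι] (g : ι → Type*) [∀ i, Finite (g i)] :
    Nat.card (Σ i, g i) = ∑ i, Nat.card (g i) := by
  letI : ∀ i, Fintype (g i) := fun i => Fintype.ofFinite _
  rw [Nat.card_eq_fintype_card, Fintype.card_sigma]
  exact Finset.sum_congr rfl fun i _ => Nat.card_eq_fintype_card.symm

noncomputable def Phi (n : ℕ) :
    (Σ p : Fin (n+1), {σ : Equiv.Perm (Fin (p : ℕ)) // Avoids312 σ} ×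
      {τ : Equiv.Perm (Fin (n - (p : ℕ))) // Avoids312 τ}) →
      {π : Equiv.Perm (Fin (n+1)) // Avoids312 π} :=
  fun x => ⟨insPerm n (x.1 : ℕ) (Nat.lt_succ_iff.mp x.1.isLt) x.2.1.1 x.2.2.1,
    insPerm_avoids x.2.1.2 x.2.2.2⟩

set_option maxHeartbeats 1000000 in
theorem Phi_bijective (n : ℕ) : Function.Bijective (Phi n) := by
  constructor
  · rintro ⟨p₁, ⟨σ₁, hσ₁⟩, ⟨τ₁, hτ₁⟩⟩ ⟨p₂, ⟨σ₂, hσ₂⟩, ⟨τ₂, hτ₂⟩⟩ h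
    have hperm : insPerm n (p₁ : ℕ) (Nat.lt_succ_iff.mp p₁.isLt) σ₁ τ₁
        = insPerm n (p₂ : ℕ) (Nat.lt_succ_iff.mp p₂.isLt) σ₂ τ₂ := congrArg Subtype.val h
    have hzero1 : insPerm n (p₂ : ℕ) (Nat.lt_succ_iff.mp p₂.isLt) σ₂ τ₂ ⟨(p₁ : ℕ), p₁.isLt⟩
        = 0 := by
      rw [← hperm]
      apply Fin.ext
      rw [insPerm_apply, insFun_eq rfl]
      simp
    have hpp : p₁ = p₂ := Fin.ext (insPerm_zero hzero1)
    obtain rfl := hpp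
    have hσ : σ₁ = σ₂ := by
      apply Equiv.ext
      intro x
      have hx := congrArg
        (fun ρ : Equiv.Perm (Fin (n+1)) => (ρ ⟨(x : ℕ), by have := x.isLt; omega⟩ : ℕ)) hperm
      simp only [insPerm_apply] at hx
      rw [insFun_sigma, insFun_sigma] at hx
      exact Fin.ext (by omega)
    have hτ : τ₁ = τ₂ := by
      apply Equiv.ext
      intro x
      have hx := congrArg
        (fun ρ : Equiv.Perm (Fin (n+1)) =>
          (ρ ⟨(x : ℕ) + (p₁ : ℕ) + 1, by have := x.isLt; omega⟩ : ℕ)) hperm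
      simp only [insPerm_apply] at hx
      rw [insFun_tau, insFun_tau] at hx
      exact Fin.ext (by omega)
    subst hσ
    subst hτ
    rfl
  · rintro ⟨π, hπ⟩
    obtain ⟨p, hp, σ, τ, hσ, hτ, heq⟩ := exists_decomp π hπ
    exact ⟨⟨⟨p, by omega⟩, ⟨σ, hσ⟩, ⟨τ, hτ⟩⟩, Subtype.ext heq⟩

theorem f_succ (n : ℕ) : f (n + 1) = ∑ p : Fin (n + 1), f p * f (n - (p : ℕ)) := by
  have hcard := Nat.card_congr (Equiv.ofBijective (Phi n) (Phi_bijective n))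
  rw [f, ← hcard, card_sigma']
  refine Finset.sum_congr rfl fun p _ => ?_
  rw [Nat.card_prod]
  rfl

theorem f_eq_catalan : ∀ n, f n = catalan n := by
  intro n
  induction n using Nat.strong_induction_on with
  | _ n ih =>
    match n, ih with
    | 0, _ => rw [f_zero, catalan_zero]
    | Nat.succ m, ih =>
      rw [f_succ, catalan_succ]
      refine Finset.sum_congr rfl fun i _ => ?_
      rw [ih i (by have := i.isLt; omega), ih (m - (i : ℕ)) (by omega)]

end Av312

/-- **Theorem.** For every `n ≥ 0`, the number of 312-avoiding permutations of
`{1,…,n}` equals the Catalan number `C_n = (1/(n+1)) * binom(2n, n)`. -/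
theorem card_avoids312_eq_catalan (n : ℕ) :
    Nat.card {π : Equiv.Perm (Fin n) // Avoids312 π} = (2 * n).choose n / (n + 1) := by
  have h : Nat.card {π : Equiv.Perm (Fin n) // Avoids312 π} = catalan n :=
    Av312.f_eq_catalan n
  rw [h, catalan_eq_centralBinom_div]
  rfl
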